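/- Let 0 < τ₂ < τ₁ be reals, let x be a real number, let k ≥ 1 and let r₁, …, r_k be natural numbers with r_j ≥ 1 for every j. Set s_k = r₁ + ⋯ + r_k and m_j = r_j + r_{j+1} + ⋯ + r_k (so m_{k+1} = 0). Then the deformed multinomial coefficients satisfy the recurrence M(x; r₁,…,r_k) = τ₂^{s_k} · M(x−1; r₁,…,r_k) + Σ_{j=1}^{k} τ₁^{x−m_j} · τ₂^{m_{j+1}} · M(x−1; r₁,…,r_{j−1}, r_j−1, r_{j+1},…,r_k). (This is the second recurrence of the paper's Proposition on multinomial coefficients, with the factor τ₂^{m_{j+1}} in place of τ₂^{s_{j−1}} so that the identity holds for all k.) -/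

import Mathlib

open Finset

noncomputable def dnum (τ₁ τ₂ x : ℝ) : ℝ := (τ₁ ^ x - τ₂ ^ x) / (τ₁ - τ₂)

noncomputable def dfac (τ₁ τ₂ : ℝ) (r : ℕ) : ℝ :=
  ∏ j ∈ Finset.range r, dnum τ₁ τ₂ ((j : ℝ) + 1)

noncomputable def dfall (τ₁ τ₂ x : ℝ) (r : ℕ) : ℝ :=
  ∏ i ∈ Finset.range r, dnum τ₁ τ₂ (x - (i : ℝ))

noncomputable def dbinom (τ₁ τ₂ x : ℝ) (r : ℕ) : ℝ := dfall τ₁ τ₂ x r / dfac τ₁ τ₂ r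

noncomputable def dmulti (τ₁ τ₂ x : ℝ) {k : ℕ} (r : Fin k → ℕ) : ℝ :=
  dfall τ₁ τ₂ x (∑ j, r j) / ∏ j, dfac τ₁ τ₂ (r j)

lemma dnum_pos {τ₁ τ₂ : ℝ} (hτ₂ : 0 < τ₂) (hττ : τ₂ < τ₁) {x : ℝ} (hx : 0 < x) :
    0 < dnum τ₁ τ₂ x := by
  have h := Real.rpow_lt_rpow hτ₂.le hττ hx
  have h2 : (0:ℝ) < τ₂ ^ x := Real.rpow_pos_of_pos hτ₂ x
  exact div_pos (by linarith) (by linarith)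

lemma dfac_pos {τ₁ τ₂ : ℝ} (hτ₂ : 0 < τ₂) (hττ : τ₂ < τ₁) (r : ℕ) :
    0 < dfac τ₁ τ₂ r :=
  Finset.prod_pos fun j _ => dnum_pos hτ₂ hττ (by positivity)

lemma dfall_succ' (τ₁ τ₂ x : ℝ) (n : ℕ) :
    dfall τ₁ τ₂ x (n+1) = dnum τ₁ τ₂ x * dfall τ₁ τ₂ (x-1) n := by
  rw [dfall, Finset.prod_range_succ', dfall, Nat.cast_zero, sub_zero, mul_comm]
  congr 1
  refine Finset.prod_congr rfl fun i _ => ?_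
  congr 1
  push_cast
  ring

lemma dfall_succ (τ₁ τ₂ x : ℝ) (n : ℕ) :
    dfall τ₁ τ₂ x (n+1) = dfall τ₁ τ₂ x n * dnum τ₁ τ₂ (x - n) :=
  Finset.prod_range_succ _ _

lemma dfac_succ (τ₁ τ₂ : ℝ) (n : ℕ) :
    dfac τ₁ τ₂ (n+1) = dfac τ₁ τ₂ n * dnum τ₁ τ₂ ((n:ℝ)+1) :=
  Finset.prod_range_succ _ _

lemma telescope {τ₁ τ₂ : ℝ} (hτ₂ : 0 < τ₂) (hττ : τ₂ < τ₁) (x : ℝ) (k : ℕ)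
    (c : ℕ → ℕ) (hmono : ∀ t, c (t+1) ≤ c t) (hck : c k = 0) :
    dnum τ₁ τ₂ x = τ₂ ^ ((c 0 : ℕ) : ℝ) * dnum τ₁ τ₂ (x - c 0) +
      ∑ t ∈ Finset.range k,
        τ₁ ^ (x - (c t : ℝ)) * τ₂ ^ ((c (t+1) : ℕ) : ℝ) *
          dnum τ₁ τ₂ (((c t - c (t+1) : ℕ)) : ℝ) := by
  have h1 : (0:ℝ) < τ₁ := hτ₂.trans hττ
  have hne : τ₁ - τ₂ ≠ 0 := by linarith
  set g : ℕ → ℝ := fun t => τ₁ ^ (x - (c t : ℝ)) * τ₂ ^ ((c t : ℝ)) / (τ₁ - τ₂) with hg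
  have key : ∀ t, τ₁ ^ (x - (c t : ℝ)) * τ₂ ^ ((c (t+1) : ℕ) : ℝ) *
      dnum τ₁ τ₂ (((c t - c (t+1) : ℕ)) : ℝ) = g (t+1) - g t := by
    intro t
    have hd : ((c t - c (t+1) : ℕ) : ℝ) = (c t : ℝ) - c (t+1) := by
      rw [Nat.cast_sub (hmono t)]
    rw [hd, dnum, hg]
    have e1 : τ₁ ^ (x - (c t : ℝ)) * τ₁ ^ ((c t : ℝ) - c (t+1)) = τ₁ ^ (x - (c (t+1) : ℝ)) := by
      rw [← Real.rpow_add h1]; ring_nf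
    have e2 : τ₂ ^ (c (t+1)) * τ₂ ^ ((c t : ℝ) - c (t+1)) = (τ₂ ^ (c t) : ℝ) := by
      rw [← Real.rpow_natCast τ₂ (c (t+1)), ← Real.rpow_natCast τ₂ (c t),
        ← Real.rpow_add hτ₂]; ring_nf
    field_simp
    simp only [Real.rpow_natCast]
    linear_combination (τ₂ ^ (c (t+1)) : ℝ) * e1 - (τ₁ ^ (x - (c t:ℝ))) * e2
  rw [Finset.sum_congr rfl fun t _ => key t, Finset.sum_range_sub g]
  have hgk : g k = τ₁ ^ x / (τ₁ - τ₂) := by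
    rw [hg]; simp [hck]
  have hg0 : g 0 = τ₁ ^ (x - (c 0 : ℝ)) * τ₂ ^ ((c 0 : ℝ)) / (τ₁ - τ₂) := rfl
  rw [hgk, hg0, dnum, dnum]
  have e3 : (τ₂ ^ (c 0) : ℝ) * τ₂ ^ (x - (c 0 : ℝ)) = τ₂ ^ x := by
    rw [← Real.rpow_natCast τ₂ (c 0), ← Real.rpow_add hτ₂]; ring_nf
  field_simp
  simp only [Real.rpow_natCast]
  linear_combination e3

/-- Second recurrence for the deformed multinomial coefficients:
`M(x; r₁,…,r_k) = τ₂^{s_k} M(x−1; r₁,…,r_k)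
  + Σ_j τ₁^{x−m_j} τ₂^{m_{j+1}} M(x−1; …, r_j−1, …)`,
where `s_k = r₁+⋯+r_k` and `m_j = r_j+⋯+r_k`. -/
theorem deformed_multinomial_recurrence_second
    (τ₁ τ₂ : ℝ) (hτ₂ : 0 < τ₂) (hττ : τ₂ < τ₁) (x : ℝ)
    (k : ℕ) (hk : 1 ≤ k) (r : Fin k → ℕ) (hr : ∀ j, 1 ≤ r j) :
    dmulti τ₁ τ₂ x r =
      τ₂ ^ (((∑ j, r j : ℕ) : ℝ)) * dmulti τ₁ τ₂ (x - 1) r +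
        ∑ j : Fin k,
          τ₁ ^ (x - ((∑ i ∈ Finset.Ici j, r i : ℕ) : ℝ)) *
            τ₂ ^ (((∑ i ∈ Finset.Ioi j, r i : ℕ) : ℝ)) *
            dmulti τ₁ τ₂ (x - 1) (Function.update r j (r j - 1)) := by
  classical
  have h1 : (0:ℝ) < τ₁ := hτ₂.trans hττ
  obtain ⟨c, hc⟩ : ∃ c : ℕ → ℕ, ∀ t, c t = ∑ i : Fin k, (if t ≤ (i:ℕ) then r i else 0) :=
    ⟨_, fun _ => rfl⟩
  obtain ⟨s, hs_def⟩ : ∃ s : ℕ, s = ∑ j, r j := ⟨_, rfl⟩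
  have hs : 1 ≤ s := hs_def ▸ le_trans (hr ⟨0, hk⟩)
    (Finset.single_le_sum (f := r) (fun i _ => Nat.zero_le _) (Finset.mem_univ _))
  have hc0 : c 0 = s := by
    rw [hc, hs_def]
    exact Finset.sum_congr rfl fun i _ => if_pos (Nat.zero_le _)
  have hck : c k = 0 := by
    rw [hc]
    exact Finset.sum_eq_zero fun i _ => if_neg (by omega)
  have hmono : ∀ t, c (t+1) ≤ c t := by
    intro t
    rw [hc, hc]
    exact Finset.sum_le_sum fun i _ => by split_ifs <;> omega
  have hIci : ∀ j : Fin k, (∑ i ∈ Finset.Ici j, r i) = c (j:ℕ) := by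
    intro j
    have h : Finset.Ici j = Finset.univ.filter (fun i : Fin k => (j:ℕ) ≤ (i:ℕ)) := by
      ext i
      rw [Finset.mem_Ici, Finset.mem_filter]
      exact ⟨fun h => ⟨Finset.mem_univ _, h⟩, fun h => h.2⟩
    rw [hc, h, Finset.sum_filter]
  have hIoi : ∀ j : Fin k, (∑ i ∈ Finset.Ioi j, r i) = c ((j:ℕ)+1) := by
    intro j
    have h : Finset.Ioi j = Finset.univ.filter (fun i : Fin k => (j:ℕ)+1 ≤ (i:ℕ)) := by
      ext i
      rw [Finset.mem_Ioi, Finset.mem_filter]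
      exact ⟨fun h => ⟨Finset.mem_univ _, h⟩, fun h => h.2⟩
    rw [hc, h, Finset.sum_filter]
  have hstep : ∀ j : Fin k, c (j:ℕ) = r j + c ((j:ℕ)+1) := by
    intro j
    rw [hc, hc]
    have h2 : ∀ i : Fin k, (if (j:ℕ) ≤ (i:ℕ) then r i else 0)
        = (if i = j then r i else 0) + (if (j:ℕ)+1 ≤ (i:ℕ) then r i else 0) := by
      intro i
      rcases eq_or_ne i j with h|h
      · subst h; simp
      · have hij : (i:ℕ) ≠ (j:ℕ) := fun hc' => h (Fin.ext hc')
        rw [if_neg h]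
        split_ifs <;> omega
    rw [Finset.sum_congr rfl fun i _ => h2 i, Finset.sum_add_distrib,
      Finset.sum_ite_eq' Finset.univ j r, if_pos (Finset.mem_univ j)]
  obtain ⟨D, hD_def⟩ : ∃ D : ℝ, D = ∏ j, dfac τ₁ τ₂ (r j) := ⟨_, rfl⟩
  have hD : 0 < D := hD_def ▸ Finset.prod_pos fun j _ => dfac_pos hτ₂ hττ _
  obtain ⟨P, hP_def⟩ : ∃ P : ℝ, P = dfall τ₁ τ₂ (x-1) (s-1) := ⟨_, rfl⟩
  have hs1 : s = s - 1 + 1 := by omega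
  have hsub : ((s - 1 : ℕ) : ℝ) = (s:ℝ) - 1 := by
    rw [Nat.cast_sub hs]; norm_num
  have hA : dfall τ₁ τ₂ x s = dnum τ₁ τ₂ x * P := by
    conv_lhs => rw [hs1]
    rw [dfall_succ', hP_def]
  have hB : dfall τ₁ τ₂ (x-1) s = P * dnum τ₁ τ₂ (x - s) := by
    have harg : x - 1 - ((s-1 : ℕ):ℝ) = x - s := by rw [hsub]; ring
    conv_lhs => rw [hs1]
    rw [dfall_succ, harg, hP_def]
  have hC : ∀ j : Fin k, dmulti τ₁ τ₂ (x-1) (Function.update r j (r j - 1))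
      = dnum τ₁ τ₂ (r j) * P / D := by
    intro j
    have hsplit : s = r j + ∑ i ∈ Finset.univ \ {j}, r i :=
      hs_def.trans (Finset.sum_eq_add_sum_sdiff_singleton_of_mem (Finset.mem_univ j) r)
    have hdiff : ∑ i ∈ Finset.univ \ {j}, Function.update r j (r j - 1) i
        = ∑ i ∈ Finset.univ \ {j}, r i :=
      Finset.sum_congr rfl fun i hi =>
        Function.update_of_ne (by simpa using (Finset.mem_sdiff.mp hi).2) _ _
    have hsum_upd : ∑ i, Function.update r j (r j - 1) i = s - 1 := by
      rw [Finset.sum_eq_add_sum_sdiff_singleton_of_mem (Finset.mem_univ j)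
        (Function.update r j (r j - 1)), Function.update_self, hdiff]
      have := hr j
      omega
    have harg : ((r j - 1 : ℕ):ℝ) + 1 = ((r j : ℕ):ℝ) := by
      rw [Nat.cast_sub (hr j)]; ring
    have hrj1 : r j = (r j - 1) + 1 := by have := hr j; omega
    have hfacj : dfac τ₁ τ₂ (r j) = dfac τ₁ τ₂ (r j - 1) * dnum τ₁ τ₂ (r j) := by
      conv_lhs => rw [hrj1]
      rw [dfac_succ, harg]
    have hprod : ∏ i, dfac τ₁ τ₂ (Function.update r j (r j - 1) i)
        = dfac τ₁ τ₂ (r j - 1) * ∏ i ∈ Finset.univ \ {j}, dfac τ₁ τ₂ (r i) := by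
      rw [Finset.prod_eq_mul_prod_sdiff_singleton_of_mem (Finset.mem_univ j)
        (fun i => dfac τ₁ τ₂ (Function.update r j (r j - 1) i)), Function.update_self]
      exact congrArg _ (Finset.prod_congr rfl fun i hi => by
        rw [Function.update_of_ne (by simpa using (Finset.mem_sdiff.mp hi).2)])
    have hDsplit : D = dfac τ₁ τ₂ (r j) * ∏ i ∈ Finset.univ \ {j}, dfac τ₁ τ₂ (r i) :=
      hD_def.trans (Finset.prod_eq_mul_prod_sdiff_singleton_of_mem (Finset.mem_univ j) _)
    have hnum_pos : 0 < dnum τ₁ τ₂ ((r j : ℕ) : ℝ) :=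
      dnum_pos hτ₂ hττ (by exact_mod_cast hr j)
    have hpp : 0 < ∏ i ∈ Finset.univ \ {j}, dfac τ₁ τ₂ (r i) :=
      Finset.prod_pos fun i _ => dfac_pos hτ₂ hττ _
    have hfp : 0 < dfac τ₁ τ₂ (r j - 1) := dfac_pos hτ₂ hττ _
    rw [dmulti, hsum_upd, hprod, ← hP_def, hDsplit, hfacj]
    field_simp
  have hscalar := telescope hτ₂ hττ x k c hmono hck
  have hfin := Fin.sum_univ_eq_sum_range
    (fun t => τ₁ ^ (x - (c t : ℝ)) * τ₂ ^ ((c (t+1) : ℕ) : ℝ) *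
      dnum τ₁ τ₂ (((c t - c (t+1) : ℕ)) : ℝ)) k
  rw [← hfin] at hscalar
  have hrval : ∀ j : Fin k, (c (j:ℕ) - c ((j:ℕ)+1) : ℕ) = r j := by
    intro j; have := hstep j; omega
  simp only [hrval] at hscalar
  rw [hc0] at hscalar
  simp only [hC, hIci, hIoi]
  rw [dmulti, dmulti, ← hs_def, ← hD_def, hA, hB, hscalar]
  rw [add_mul, Finset.sum_mul, add_div, Finset.sum_div]
  congr 1
  · ring
  · exact Finset.sum_congr rfl fun j _ => by ring
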